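/- Let $\rho_{\tilde{\mathcal{R}}}(X) := \sup_{\mu \in D} \int X\, d\mu - \alpha(\mu)$ on $L^{\mathcal{R}}$, where $D \subseteq (\mathbf{ca}_{\mathbb{P}})_+$ and $\alpha \ge 0$, and suppose every $X \in L^{\mathcal{R}}$ is $\mu$-integrable for $\mu \in D$. Then for every $X \in L^{\mathcal{R}}$: $\rho_{\tilde{\mathcal{R}}}(X) = \sup_{m \in \mathbb{N}} \rho_{\tilde{\mathcal{R}}}(X \wedge m)$. -/
import Mathlib


/-!
Statement 14 (eq. (approx)): For the extension
`ρ̃(X) = sup_{μ ∈ D} ∫ X dμ - α(μ)` on the Minkowski domain,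
`ρ̃(X) = sup_m ρ̃(X ∧ m)`.
-/

open MeasureTheory

variable {Ω : Type*} [MeasurableSpace Ω]

/-- `ρ̃(X) = sup_{μ ∈ D} ∫ X dμ - α(μ)`, with values in `EReal`. -/
noncomputable def rhoTilde (D : Set (Measure Ω)) (α : Measure Ω → ℝ)
    (X : Ω → ℝ) : EReal :=
  ⨆ μ ∈ D, ((∫ ω, X ω ∂μ - α μ : ℝ) : EReal)

theorem stmt14 (P : Measure Ω) [IsProbabilityMeasure P]
    (D : Set (Measure Ω)) (hD : D.Nonempty)
    -- D ⊆ (ca_ℙ)₊ consists of (positive) finite measures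
    (hDfin : ∀ μ ∈ D, IsFiniteMeasure μ) (hDac : ∀ μ ∈ D, μ ≪ P)
    -- the penalty is nonnegative
    (α : Measure Ω → ℝ) (hα : ∀ μ ∈ D, 0 ≤ α μ)
    -- X ∈ L^R: X is μ-integrable for every μ ∈ D
    (X : Ω → ℝ) (hXm : Measurable X) (hXint : ∀ μ ∈ D, Integrable X μ) :
    rhoTilde D α X = ⨆ m : ℕ, rhoTilde D α (fun ω => min (X ω) (m : ℝ)) := by
  have habs : ∀ (ω : Ω) (m : ℕ), |min (X ω) (m : ℝ)| ≤ |X ω| := by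
    intro ω m
    rcases le_total (X ω) (m : ℝ) with h | h
    · rw [min_eq_left h]
    · rw [min_eq_right h, abs_of_nonneg (Nat.cast_nonneg m)]
      exact le_trans h (le_abs_self _)
  have hmin_int : ∀ μ ∈ D, ∀ m : ℕ, Integrable (fun ω => min (X ω) (m : ℝ)) μ := by
    intro μ hμ m
    refine (hXint μ hμ).mono ((hXm.min measurable_const).aestronglyMeasurable) ?_
    filter_upwards with ω
    simpa [Real.norm_eq_abs] using habs ω m
  have htendsto : ∀ μ ∈ D, Filter.Tendsto (fun m : ℕ => ∫ ω, min (X ω) (m : ℝ) ∂μ)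
      Filter.atTop (nhds (∫ ω, X ω ∂μ)) := by
    intro μ hμ
    refine tendsto_integral_of_dominated_convergence (fun ω => |X ω|)
      (fun m => (hXm.min measurable_const).aestronglyMeasurable)
      (hXint μ hμ).abs ?_ ?_
    · intro m
      filter_upwards with ω
      simpa [Real.norm_eq_abs] using habs ω m
    · filter_upwards with ω
      have h : (fun m : ℕ => min (X ω) (m : ℝ)) =ᶠ[Filter.atTop] fun _ => X ω := by
        filter_upwards [tendsto_natCast_atTop_atTop.eventually_ge_atTop (X ω)] with m hm
        exact min_eq_left hm
      exact Filter.Tendsto.congr' h.symm tendsto_const_nhds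
  have hmono : ∀ μ ∈ D, Monotone (fun m : ℕ => ∫ ω, min (X ω) (m : ℝ) ∂μ) := by
    intro μ hμ m n hmn
    exact integral_mono (hmin_int μ hμ m) (hmin_int μ hμ n)
      (fun ω => min_le_min le_rfl (Nat.cast_le.mpr hmn))
  apply le_antisymm
  · -- LHS ≤ RHS
    refine iSup₂_le fun μ hμ => ?_
    have hsup : (⨆ m : ℕ, ((∫ ω, min (X ω) (m : ℝ) ∂μ - α μ : ℝ) : EReal))
        = ((∫ ω, X ω ∂μ - α μ : ℝ) : EReal) := by
      refine iSup_eq_of_tendsto ?_ ?_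
      · intro m n hmn
        exact EReal.coe_le_coe_iff.mpr (sub_le_sub_right (hmono μ hμ hmn) _)
      · exact (EReal.continuous_coe_iff.mpr continuous_id).continuousAt.tendsto.comp
          ((htendsto μ hμ).sub_const (α μ)) |>.congr (fun m => rfl)
    rw [← hsup]
    refine iSup_le fun m => ?_
    refine le_trans ?_ (le_iSup _ m)
    exact le_iSup₂_of_le μ hμ le_rfl
  · -- RHS ≤ LHS
    refine iSup_le fun m => iSup₂_le fun μ hμ => ?_
    refine le_iSup₂_of_le μ hμ ?_
    refine EReal.coe_le_coe_iff.mpr (sub_le_sub_right ?_ _)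
    exact integral_mono (hmin_int μ hμ m) (hXint μ hμ) (fun ω => min_le_left _ _)
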